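/- Let H be a graph with χ(H) ≥ 3, let G be an H-free graph on n vertices with m edges, and let x, y be vertices of G. Then the number of paths from x to y in G is at most the maximum of ∏_{i=2}^{n} max{r_i, 1} over all sequences (r_2, …, r_n) of nonnegative integers satisfying ∑_{i=2}^{n} r_i ≤ m and, for every 2 ≤ t ≤ n, ∑_{i=2}^{t} r_i ≤ ex(t; H), where ex(t; H) is the maximum number of edges of a t-vertex H-free graph. -/

import Mathlib

open SimpleGraph Finset

/-- The cycle graph on `ZMod r`. -/
def cycGraph (r : ℕ) : SimpleGraph (ZMod r) := SimpleGraph.fromRel (fun a b => a = b + 1)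

/-- The number of injective graph homomorphisms from `H` to `G`
(labelled copies of `H` as a subgraph of `G`). -/
noncomputable def copyCnt {α β : Type*} (H : SimpleGraph α) (G : SimpleGraph β) : ℕ :=
  Nat.card {f : α → β // Function.Injective f ∧ ∀ a b, H.Adj a b → G.Adj (f a) (f b)}

/-- The number of cycles of length `r` in `G`, counted as subgraphs
(i.e. up to starting vertex and orientation). -/
noncomputable def cycCount {V : Type*} (r : ℕ) (G : SimpleGraph V) : ℕ := copyCnt (cycGraph r) G / (2 * r)

/-- The total number of cycles in `G`. -/
noncomputable def totCycCount {V : Type*} [Fintype V] (G : SimpleGraph V) : ℕ :=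
  ∑ r ∈ Finset.Icc 3 (Fintype.card V), cycCount r G

/-- The number of Hamiltonian cycles in `G`. -/
noncomputable def hamCnt {V : Type*} [Fintype V] (G : SimpleGraph V) : ℕ := cycCount (Fintype.card V) G

/-- `G` contains no subgraph isomorphic to `H`. -/
def Freeof {α β : Type*} (H : SimpleGraph α) (G : SimpleGraph β) : Prop :=
  ¬ ∃ f : α → β, Function.Injective f ∧ ∀ a b, H.Adj a b → G.Adj (f a) (f b)

/-- The number of simple paths between `x` and `y` in `G`. -/
noncomputable def pathCnt {V : Type*} (G : SimpleGraph V) (x y : V) : ℕ :=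
  Nat.card {p : G.Walk x y // p.IsPath}

/-- The number of edges of `G`. -/
noncomputable def edgeCnt {V : Type*} (G : SimpleGraph V) : ℕ := Nat.card G.edgeSet

/-- The Turán extremal number `ex(t; H)`: the maximum number of edges of a
`t`-vertex `H`-free graph. -/
noncomputable def exNum {α : Type*} (t : ℕ) (H : SimpleGraph α) : ℕ :=
  sSup {m | ∃ G : SimpleGraph (Fin t), Freeof H G ∧ edgeCnt G = m}

-- Lemma D
lemma pathCnt_self {V : Type*} (G : SimpleGraph V) (x : V) : pathCnt G x x = 1 := by
  haveI : Unique {p : G.Walk x x // p.IsPath} :=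
    ⟨⟨⟨.nil, Walk.IsPath.nil⟩⟩, fun p => Subtype.ext (Walk.isPath_iff_eq_nil.mp p.2)⟩
  exact Nat.card_unique

-- Lemma C
lemma freeof_of_embedding {α β γ : Type*} {H : SimpleGraph α} {G : SimpleGraph β}
    {G' : SimpleGraph γ} (e : G' ↪g G) (h : Freeof H G) : Freeof H G' := by
  rintro ⟨f, hinj, hadj⟩
  exact h ⟨e ∘ f, e.injective.comp hinj, fun a b hab => e.map_rel_iff.mpr (hadj a b hab)⟩

-- Lemma B
lemma edgeCnt_le_exNum {α V : Type*} [Fintype V] (H : SimpleGraph α) (G : SimpleGraph V)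
    (hfree : Freeof H G) : edgeCnt G ≤ exNum (Fintype.card V) H := by
  classical
  set t := Fintype.card V
  let e : V ≃ Fin t := Fintype.equivFin V
  let G₂ : SimpleGraph (Fin t) := G.comap e.symm
  have hfree₂ : Freeof H G₂ := by
    rintro ⟨f, hinj, hadj⟩
    exact hfree ⟨(e.symm : Fin t → V) ∘ f, e.symm.injective.comp hinj, hadj⟩
  have hcnt : edgeCnt G₂ = edgeCnt G :=
    Nat.card_congr (SimpleGraph.Iso.comap e.symm G).mapEdgeSet
  have hbdd : BddAbove {m | ∃ G : SimpleGraph (Fin t), Freeof H G ∧ edgeCnt G = m} := by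
    refine ⟨t.choose 2, ?_⟩
    rintro m ⟨G', -, rfl⟩
    have : edgeCnt G' = G'.edgeFinset.card := by
      rw [edgeCnt, Nat.card_eq_fintype_card, card_edgeSet]
    rw [this]
    simpa using G'.card_edgeFinset_le_card_choose_two
  calc edgeCnt G = edgeCnt G₂ := hcnt.symm
    _ ≤ exNum t H := le_csSup hbdd ⟨G₂, hfree₂, rfl⟩

-- Lemma A
lemma edgeCnt_induce_compl {V : Type*} [Fintype V] [DecidableEq V] (G : SimpleGraph V)
    [DecidableRel G.Adj] (x : V) :
    edgeCnt (G.induce ({x}ᶜ : Set V)) + G.degree x ≤ edgeCnt G := by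
  classical
  set s : Set V := {x}ᶜ
  set I : Set (Sym2 V) := Sym2.map (Subtype.val) '' (G.induce s).edgeSet with hI
  have hIsub : I ⊆ G.edgeSet := by
    rintro e ⟨e', he', rfl⟩
    induction e' with
    | _ a b => exact he'
  have hInotx : ∀ e ∈ I, x ∉ e := by
    rintro e ⟨e', he', rfl⟩
    induction e' with
    | _ a b =>
      simp only [Sym2.map_pair_eq, Sym2.mem_iff]
      rintro (h | h)
      · exact a.2 h.symm
      · exact b.2 h.symm
  have hA : G.incidenceSet x ⊆ G.edgeSet := G.incidenceSet_subset x
  have hdisj : Disjoint (G.incidenceSet x) I := by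
    rw [Set.disjoint_left]
    intro e he hd
    exact hInotx e hd he.2
  have hcard1 : (G.incidenceSet x).ncard = G.degree x := by
    rw [Set.ncard_eq_toFinset_card', ← G.card_incidenceFinset_eq_degree (v := x)]
    congr 1
  have hcard2 : I.ncard = edgeCnt (G.induce s) := by
    rw [hI, Set.ncard_image_of_injective _ (Sym2.map.injective Subtype.val_injective)]
    rfl
  calc edgeCnt (G.induce s) + G.degree x = I.ncard + (G.incidenceSet x).ncard := by
        rw [hcard1, hcard2]
    _ = (I ∪ G.incidenceSet x).ncard := (Set.ncard_union_eq hdisj.symm (Set.toFinite _) (Set.toFinite _)).symm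
    _ ≤ G.edgeSet.ncard := Set.ncard_le_ncard (Set.union_subset hIsub hA) (Set.toFinite _)
    _ = edgeCnt G := by rfl

-- walk lifting into induced subgraph
def liftWalk {V : Type*} {G : SimpleGraph V} {s : Set V} :
    ∀ {u v : V} (q : G.Walk u v) (h : ∀ w ∈ q.support, w ∈ s),
      (G.induce s).Walk ⟨u, h u q.start_mem_support⟩ ⟨v, h v q.end_mem_support⟩
  | _, _, .nil, _ => .nil
  | _, _, .cons ha q, h =>
      .cons (by exact ha) (liftWalk q (fun w hw => h w (by simp [Walk.support_cons, hw])))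

lemma liftWalk_map {V : Type*} {G : SimpleGraph V} {s : Set V} :
    ∀ {u v : V} (q : G.Walk u v) (h : ∀ w ∈ q.support, w ∈ s),
      ((liftWalk q h).map (SimpleGraph.Embedding.induce s).toHom) = q
  | _, _, .nil, _ => rfl
  | _, _, .cons ha q, h => by
      simp only [liftWalk, Walk.map_cons]
      exact congrArg _ (liftWalk_map q _)

lemma liftWalk_isPath {V : Type*} {G : SimpleGraph V} {s : Set V} {u v : V}
    (q : G.Walk u v) (h : ∀ w ∈ q.support, w ∈ s) (hq : q.IsPath) :
    (liftWalk q h).IsPath :=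
  Walk.IsPath.of_map (f := (SimpleGraph.Embedding.induce s).toHom)
    (by rw [liftWalk_map]; exact hq)

def pathDecomp {V : Type*} {G : SimpleGraph V} {x y : V} (hxy : x ≠ y)
    (pp : {p : G.Walk x y // p.IsPath}) :
    Σ z : G.neighborSet x,
      {q : (G.induce ({x}ᶜ : Set V)).Walk ⟨z.1, Set.mem_compl_singleton_iff.mpr z.2.ne'⟩
          ⟨y, Set.mem_compl_singleton_iff.mpr (Ne.symm hxy)⟩ // q.IsPath} :=
  match y, hxy, pp.1, pp.2 with
  | _, hxy, .nil, _ => absurd rfl hxy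
  | _, hxy, .cons ha q, hp =>
    have h2 := (Walk.cons_isPath_iff _ _).mp hp
    have hsup : ∀ w ∈ q.support, w ∈ ({x}ᶜ : Set V) := fun w hw =>
      Set.mem_compl_singleton_iff.mpr (fun hwx => h2.2 (hwx ▸ hw))
    ⟨⟨_, ha⟩, ⟨liftWalk q hsup, liftWalk_isPath q hsup h2.1⟩⟩

lemma pathDecomp_spec {V : Type*} {G : SimpleGraph V} {x y : V} (hxy : x ≠ y)
    (pp : {p : G.Walk x y // p.IsPath}) :
    Walk.cons (pathDecomp hxy pp).1.2
      (((pathDecomp hxy pp).2.1).map (SimpleGraph.Embedding.induce _).toHom) = pp.1 := by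
  obtain ⟨p, hp⟩ := pp
  cases p with
  | nil => exact absurd rfl hxy
  | cons ha q =>
    simp only [pathDecomp]
    rw [liftWalk_map]
    rfl

lemma pathCnt_le_sum {V : Type*} [Fintype V] [DecidableEq V] (G : SimpleGraph V)
    [DecidableRel G.Adj] {x y : V} (hxy : x ≠ y) :
    pathCnt G x y ≤ ∑ z : G.neighborSet x,
      pathCnt (G.induce ({x}ᶜ : Set V)) ⟨z.1, Set.mem_compl_singleton_iff.mpr z.2.ne'⟩
        ⟨y, Set.mem_compl_singleton_iff.mpr (Ne.symm hxy)⟩ := by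
  classical
  have hinj : Function.Injective (pathDecomp (G := G) hxy) := by
    intro a b hab
    apply Subtype.ext
    calc a.1 = _ := (pathDecomp_spec hxy a).symm
      _ = b.1 := by rw [hab]; exact pathDecomp_spec hxy b
  haveI : DecidableRel (G.induce ({x}ᶜ : Set V)).Adj :=
    fun a b => inferInstanceAs (Decidable (G.Adj a b))
  haveI hfin : ∀ (u v : ↥({x}ᶜ : Set V)), Fintype {q : (G.induce ({x}ᶜ : Set V)).Walk u v // q.IsPath} :=
    fun u v => SimpleGraph.Path.instFintype (G.induce ({x}ᶜ : Set V))
  have h1 : pathCnt G x y ≤ Nat.card (Σ z : G.neighborSet x,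
      {q : (G.induce ({x}ᶜ : Set V)).Walk ⟨z.1, Set.mem_compl_singleton_iff.mpr z.2.ne'⟩
          ⟨y, Set.mem_compl_singleton_iff.mpr (Ne.symm hxy)⟩ // q.IsPath}) :=
    Nat.card_le_card_of_injective _ hinj
  refine h1.trans ?_
  rw [Nat.card_eq_fintype_card, Fintype.card_sigma]
  apply Finset.sum_le_sum
  intro z _
  rw [pathCnt, Nat.card_eq_fintype_card]

lemma main_lemma {β : Type*} (H : SimpleGraph β) :
    ∀ (n : ℕ) {V : Type*} [Fintype V] (G : SimpleGraph V),
      Fintype.card V = n → Freeof H G → ∀ x y : V,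
      ∃ r : ℕ → ℕ, (∑ i ∈ Finset.Icc 2 n, r i ≤ edgeCnt G) ∧
        (∀ t, 2 ≤ t → t ≤ n → ∑ i ∈ Finset.Icc 2 t, r i ≤ exNum t H) ∧
        pathCnt G x y ≤ ∏ i ∈ Finset.Icc 2 n, max (r i) 1 := by
  intro n
  induction n using Nat.strong_induction_on with
  | _ n ih =>
    intro V _ G hn hfree x y
    classical
    by_cases hxy : x = y
    · subst hxy
      exact ⟨0, by simp, fun t _ _ => by simp, by simp [pathCnt_self]⟩
    · have hcV : 1 < Fintype.card V := Fintype.one_lt_card_iff_nontrivial.mpr ⟨x, y, hxy⟩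
      have h2n : 2 ≤ n := by omega
      have hcard' : Fintype.card ↥({x}ᶜ : Set V) = n - 1 := by
        rw [Fintype.card_compl_set, Set.card_singleton, hn]
      have hfree' : Freeof H (G.induce ({x}ᶜ : Set V)) :=
        freeof_of_embedding (SimpleGraph.Embedding.induce _) hfree
      have key := pathCnt_le_sum G hxy
      have hIcc : Finset.Icc 2 n = insert n (Finset.Icc 2 (n - 1)) := by
        ext i
        simp only [Finset.mem_Icc, Finset.mem_insert]
        omega
      have hnmem : n ∉ Finset.Icc 2 (n - 1) := by
        simp only [Finset.mem_Icc]; omega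
      rcases isEmpty_or_nonempty (G.neighborSet x) with hE | hNE
      · have h0 : pathCnt G x y = 0 := le_antisymm (by simpa using key) (Nat.zero_le _)
        exact ⟨0, by simp, fun t _ _ => by simp, by simp [h0]⟩
      · obtain ⟨z0, -, hz0⟩ := Finset.exists_max_image (Finset.univ : Finset (G.neighborSet x))
          (fun z => pathCnt (G.induce ({x}ᶜ : Set V))
            ⟨z.1, Set.mem_compl_singleton_iff.mpr z.2.ne'⟩
            ⟨y, Set.mem_compl_singleton_iff.mpr (Ne.symm hxy)⟩) Finset.univ_nonempty
        obtain ⟨r, hr1, hr2, hr3⟩ := ih (n - 1) (by omega) (G.induce ({x}ᶜ : Set V)) hcard'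
          hfree' ⟨z0.1, Set.mem_compl_singleton_iff.mpr z0.2.ne'⟩
          ⟨y, Set.mem_compl_singleton_iff.mpr (Ne.symm hxy)⟩
        set r' : ℕ → ℕ := fun i => if i = n then G.degree x else r i with hr'
        have hagree : ∀ t, t ≤ n - 1 → ∑ i ∈ Finset.Icc 2 t, r' i = ∑ i ∈ Finset.Icc 2 t, r i := by
          intro t ht
          refine Finset.sum_congr rfl fun i hi => ?_
          have := Finset.mem_Icc.mp hi
          exact if_neg (by omega)
        have hsum : ∑ i ∈ Finset.Icc 2 n, r' i ≤ edgeCnt G := by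
          rw [hIcc, Finset.sum_insert hnmem, hagree (n - 1) le_rfl]
          have hsplit := edgeCnt_induce_compl G x
          have : r' n = G.degree x := if_pos rfl
          omega
        refine ⟨r', hsum, ?_, ?_⟩
        · intro t h2t htn
          by_cases ht : t ≤ n - 1
          · rw [hagree t ht]; exact hr2 t h2t ht
          · have : t = n := by omega
            subst this
            refine hsum.trans ?_
            have := edgeCnt_le_exNum H G hfree
            rwa [hn] at this
        · have hprod : ∏ i ∈ Finset.Icc 2 n, max (r' i) 1 =
              max (G.degree x) 1 * ∏ i ∈ Finset.Icc 2 (n - 1), max (r i) 1 := by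
            rw [hIcc, Finset.prod_insert hnmem]
            congr 1
            · exact congrArg (· ⊔ 1) (if_pos rfl)
            · refine Finset.prod_congr rfl fun i hi => ?_
              have := Finset.mem_Icc.mp hi
              exact congrArg (· ⊔ 1) (if_neg (by omega))
          rw [hprod]
          refine key.trans ?_
          calc ∑ z : G.neighborSet x, pathCnt (G.induce ({x}ᶜ : Set V))
                ⟨z.1, Set.mem_compl_singleton_iff.mpr z.2.ne'⟩
                ⟨y, Set.mem_compl_singleton_iff.mpr (Ne.symm hxy)⟩
              ≤ (Finset.univ : Finset (G.neighborSet x)).card •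
                pathCnt (G.induce ({x}ᶜ : Set V))
                  ⟨z0.1, Set.mem_compl_singleton_iff.mpr z0.2.ne'⟩
                  ⟨y, Set.mem_compl_singleton_iff.mpr (Ne.symm hxy)⟩ :=
                Finset.sum_le_card_nsmul _ _ _ (fun z _ => hz0 z (Finset.mem_univ z))
            _ = G.degree x * pathCnt (G.induce ({x}ᶜ : Set V))
                  ⟨z0.1, Set.mem_compl_singleton_iff.mpr z0.2.ne'⟩
                  ⟨y, Set.mem_compl_singleton_iff.mpr (Ne.symm hxy)⟩ := by
                rw [smul_eq_mul, Finset.card_univ, card_neighborSet_eq_degree]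
            _ ≤ max (G.degree x) 1 * ∏ i ∈ Finset.Icc 2 (n - 1), max (r i) 1 :=
                Nat.mul_le_mul (le_max_left _ _) hr3

/-- If `χ(H) ≥ 3` and `G` is an `H`-free graph on `n` vertices with `m` edges, then
`p_{x,y}(G)` is at most the maximum of `∏_{i=2}^n max{rᵢ,1}` over all nonnegative integer
sequences `(r_2,…,r_n)` with `∑ rᵢ ≤ m` and `∑_{i=2}^t rᵢ ≤ ex(t;H)` for all `2 ≤ t ≤ n`. -/
theorem stmt9 {α V : Type*} [Fintype V] (H : SimpleGraph α)
    (hH : 3 ≤ H.chromaticNumber) (G : SimpleGraph V) (n m : ℕ)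
    (hn : Fintype.card V = n) (hm : edgeCnt G = m) (hfree : Freeof H G) (x y : V) :
    pathCnt G x y ≤
      sSup {P | ∃ r : ℕ → ℕ, (∑ i ∈ Finset.Icc 2 n, r i ≤ m) ∧
        (∀ t, 2 ≤ t → t ≤ n → ∑ i ∈ Finset.Icc 2 t, r i ≤ exNum t H) ∧
        P = ∏ i ∈ Finset.Icc 2 n, max (r i) 1} := by
  classical
  subst hn hm
  obtain ⟨r, h1, h2, h3⟩ := main_lemma H (Fintype.card V) G rfl hfree x y
  have hbdd : BddAbove {P | ∃ r : ℕ → ℕ,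
      (∑ i ∈ Finset.Icc 2 (Fintype.card V), r i ≤ edgeCnt G) ∧
      (∀ t, 2 ≤ t → t ≤ Fintype.card V → ∑ i ∈ Finset.Icc 2 t, r i ≤ exNum t H) ∧
      P = ∏ i ∈ Finset.Icc 2 (Fintype.card V), max (r i) 1} := by
    refine ⟨(edgeCnt G + 1) ^ (Finset.Icc 2 (Fintype.card V)).card, ?_⟩
    rintro P ⟨r, hr1, hr2, rfl⟩
    refine Finset.prod_le_pow_card _ _ _ fun i hi => ?_
    have hri : r i ≤ edgeCnt G :=
      (Finset.single_le_sum (f := r) (fun _ _ => Nat.zero_le _) hi).trans hr1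
    exact max_le (by omega) (by omega)
  exact h3.trans (le_csSup hbdd ⟨r, h1, h2, rfl⟩)
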